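/- Let n be a natural number, q = 3^(2n+1), m = 3^(n+1), and let F be a finite field with q elements. Then the map x ↦ x^(m+2) is a bijection of Fˣ; equivalently, the action of Fˣ on F \ {0} given by k · γ = k^(m+2)·γ is transitive. (This is Lemma 2.16(1): K is transitive on Q₁ \ {1} acting by conjugation.) -/
import Mathlib


/-- Let q = 3^(2n+1), m = 3^(n+1) and let F be a field with q elements. Then
x ↦ x^(m+2) is a bijection of Fˣ; equivalently, the action of Fˣ on F \ {0}
given by k · γ = k^(m+2)·γ is transitive. -/
theorem stmt_16 (n : ℕ) {F : Type*} [Field F] [Fintype F]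
    (hF : Fintype.card F = 3 ^ (2 * n + 1)) :
    Function.Bijective (fun x : Fˣ => x ^ (3 ^ (n + 1) + 2)) ∧
      ∀ γ δ : F, γ ≠ 0 → δ ≠ 0 →
        ∃ κ : Fˣ, (κ : F) ^ (3 ^ (n + 1) + 2) * γ = δ := by
  haveI := Classical.decEq F
  have hcard : Fintype.card Fˣ = 3 ^ (2 * n + 1) - 1 := by
    rw [Fintype.card_units, hF]
  have hm : (3 ^ (n + 1) + 2) * (3 ^ (n + 1) - 2) + 1 = 3 * (3 ^ (2 * n + 1) - 1) := by
    have h1 : 3 ^ (n + 1) * 3 ^ (n + 1) = 3 * 3 ^ (2 * n + 1) := by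
      rw [← pow_add, ← pow_succ']; ring_nf
    have h2 : 3 ≤ 3 ^ (n + 1) := by
      calc 3 = 3 ^ 1 := by norm_num
      _ ≤ 3 ^ (n + 1) := Nat.pow_le_pow_right (by norm_num) (by omega)
    have h3 : 1 ≤ 3 ^ (2 * n + 1) := Nat.one_le_pow _ _ (by norm_num)
    nlinarith [Nat.sub_add_cancel (show 2 ≤ 3 ^ (n + 1) by omega),
      Nat.sub_add_cancel h3]
  have key : ∀ x : Fˣ, (x ^ (3 ^ (n + 1) + 2)) ^ (3 ^ (n + 1) - 2) = x⁻¹ := by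
    intro x
    have h1 : x ^ ((3 ^ (n + 1) + 2) * (3 ^ (n + 1) - 2) + 1) = 1 := by
      rw [hm, mul_comm 3, pow_mul, ← hcard, pow_card_eq_one, one_pow]
    rw [← pow_mul]
    exact eq_inv_of_mul_eq_one_left (by rw [← pow_succ]; exact h1)
  have hinj : Function.Injective (fun x : Fˣ => x ^ (3 ^ (n + 1) + 2)) := by
    intro x y h
    simp only at h
    have := key x
    rw [h, key y] at this
    exact inv_injective this.symm
  have hbij : Function.Bijective (fun x : Fˣ => x ^ (3 ^ (n + 1) + 2)) :=
    Finite.injective_iff_bijective.mp hinj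
  refine ⟨hbij, fun γ δ hγ hδ => ?_⟩
  obtain ⟨κ, hκ⟩ := hbij.surjective (Units.mk0 δ hδ * (Units.mk0 γ hγ)⁻¹)
  refine ⟨κ, ?_⟩
  have hκ' : κ ^ (3 ^ (n + 1) + 2) = Units.mk0 δ hδ * (Units.mk0 γ hγ)⁻¹ := hκ
  have : ((κ ^ (3 ^ (n + 1) + 2) : Fˣ) : F) = δ * γ⁻¹ := by
    rw [hκ']; simp
  rw [Units.val_pow_eq_pow_val] at this
  rw [this, mul_assoc, inv_mul_cancel₀ hγ, mul_one]
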